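/- Let Θ ⊆ ℝᵐ be a Borel set, G : Θ → ℝⁿ measurable, p ≥ 1, α > 0, and ρ_y a probability measure on ℝⁿ. Suppose F̃ : ℝⁿ → Θ is a measurable map satisfying, for every x ∈ Θ and y ∈ ℝⁿ, ‖G(F̃(y)) − y‖^p + α‖F̃(y)‖^p ≤ ‖G(x) − y‖^p + α‖x‖^p. Then: (i) for every probability measure ρ on Θ and every coupling π ∈ Γ(ρ, ρ_y), ∫ (‖G(F̃(y)) − y‖^p + α‖F̃(y)‖^p) dρ_y(y) ≤ ∫ (‖G(x) − y‖^p + α‖x‖^p) dπ(x,y); and (ii) the measure ((G∘F̃) × id)_# ρ_y is a coupling of G_#(F̃_# ρ_y) and ρ_y whose cost ∫‖u − v‖^p plus α times the p-th moment of F̃_#ρ_y equals the left-hand side of (i). Consequently ρ_x* = F̃_# ρ_y minimizes W_p^p(G_#ρ, ρ_y) + α ∫‖x‖^p dρ over probability measures ρ on Θ. -/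

import Mathlib

open MeasureTheory Real
open scoped ENNReal

/-- `cpl` is a coupling of `μ` and `ν`: a measure on the product whose marginals
are `μ` and `ν`. -/
def IsCoupling {X Y : Type*} [MeasurableSpace X] [MeasurableSpace Y]
    (μ : Measure X) (ν : Measure Y) (cpl : Measure (X × Y)) : Prop :=
  cpl.map Prod.fst = μ ∧ cpl.map Prod.snd = ν

open ProbabilityTheory in
/-- Key disintegration step: for any probability measure `ρ` supported on `Θ` and any
coupling `cpl` of `G_#ρ` and `ρy`, the value of the regularized functional at `F̃_#ρy`
is at most the transport cost of `cpl` plus the regularization term of `ρ`. -/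
lemma stmt9_aux {m n : ℕ} (Θ : Set (EuclideanSpace ℝ (Fin m))) (hΘ : MeasurableSet Θ)
    (G : EuclideanSpace ℝ (Fin m) → EuclideanSpace ℝ (Fin n)) (hG : Measurable G)
    (p : ℝ) (α : ℝ) (hα : 0 ≤ α)
    (ρy : Measure (EuclideanSpace ℝ (Fin n))) [IsProbabilityMeasure ρy]
    (Ft : EuclideanSpace ℝ (Fin n) → EuclideanSpace ℝ (Fin m))
    (hFt : Measurable Ft)
    (hmin : ∀ x ∈ Θ, ∀ y, ‖G (Ft y) - y‖ ^ p + α * ‖Ft y‖ ^ p ≤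
      ‖G x - y‖ ^ p + α * ‖x‖ ^ p)
    (ρ : Measure (EuclideanSpace ℝ (Fin m))) [IsProbabilityMeasure ρ] (hρΘ : ρ Θᶜ = 0)
    (cpl : Measure (EuclideanSpace ℝ (Fin n) × EuclideanSpace ℝ (Fin n)))
    (hcpl : cpl.map Prod.fst = ρ.map G ∧ cpl.map Prod.snd = ρy) :
    ∫⁻ y, ENNReal.ofReal (‖G (Ft y) - y‖ ^ p + α * ‖Ft y‖ ^ p) ∂ρy ≤
      (∫⁻ z, ENNReal.ofReal (‖z.1 - z.2‖ ^ p) ∂cpl) +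
        ∫⁻ x, ENNReal.ofReal (α * ‖x‖ ^ p) ∂ρ := by
  have hpair : Measurable (fun x => (G x, x)) := hG.prodMk measurable_id
  set μ : Measure (EuclideanSpace ℝ (Fin n) × EuclideanSpace ℝ (Fin m)) :=
    ρ.map (fun x => (G x, x)) with hμ
  haveI : IsProbabilityMeasure μ := Measure.isProbabilityMeasure_map hpair.aemeasurable
  have hfst : μ.fst = ρ.map G := by
    rw [hμ, Measure.fst, Measure.map_map measurable_fst hpair]; rfl
  set κ := μ.condKernel with hκ
  have hdis : μ.fst ⊗ₘ κ = μ := μ.disintegrate μ.condKernel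
  -- a.e. structure of μ
  have hsetmeas : MeasurableSet {z : (EuclideanSpace ℝ (Fin n)) × (EuclideanSpace ℝ (Fin m)) |
      G z.2 = z.1 ∧ z.2 ∈ Θ} :=
    (measurableSet_eq_fun (hG.comp measurable_snd) measurable_fst).inter (measurable_snd hΘ)
  have hμae : ∀ᵐ z ∂μ, G z.2 = z.1 ∧ z.2 ∈ Θ := by
    rw [hμ, ae_map_iff hpair.aemeasurable hsetmeas]
    have : ∀ᵐ x ∂ρ, x ∈ Θ := by
      rw [ae_iff]
      exact hρΘ
    filter_upwards [this] with x hx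
    exact ⟨rfl, hx⟩
  have hae1 : ∀ᵐ u ∂μ.fst, ∀ᵐ x ∂κ u, G x = u ∧ x ∈ Θ :=
    Measure.ae_ae_of_ae_compProd (p := fun z => G z.2 = z.1 ∧ z.2 ∈ Θ) (by rwa [hdis])
  -- transfer along cpl.map Prod.fst = μ.fst
  have hPmeas : MeasurableSet {u : EuclideanSpace ℝ (Fin n) | ∀ᵐ x ∂κ u, G x = u ∧ x ∈ Θ} := by
    simp only [ae_iff]
    have hT : MeasurableSet {q : (EuclideanSpace ℝ (Fin n)) × (EuclideanSpace ℝ (Fin m)) |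
        ¬ (G q.2 = q.1 ∧ q.2 ∈ Θ)} := hsetmeas.compl
    have := (ProbabilityTheory.Kernel.measurable_kernel_prodMk_left (κ := κ) hT)
      (measurableSet_singleton 0)
    exact this
  have hae2 : ∀ᵐ z ∂cpl, ∀ᵐ x ∂κ z.1, G x = z.1 ∧ x ∈ Θ := by
    rw [hfst, ← hcpl.1] at hae1
    exact (ae_map_iff measurable_fst.aemeasurable hPmeas).mp hae1
  -- measurable integrands
  have hL : Measurable (fun y : EuclideanSpace ℝ (Fin n) =>
      ENNReal.ofReal (‖G (Ft y) - y‖ ^ p + α * ‖Ft y‖ ^ p)) := by fun_prop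
  have hg : Measurable (fun x : EuclideanSpace ℝ (Fin m) =>
      ENNReal.ofReal (α * ‖x‖ ^ p)) := by fun_prop
  have hc : Measurable (fun z : (EuclideanSpace ℝ (Fin n)) × (EuclideanSpace ℝ (Fin n)) =>
      ENNReal.ofReal (‖z.1 - z.2‖ ^ p)) := by fun_prop
  have hg2 : Measurable (fun z : (EuclideanSpace ℝ (Fin n)) × (EuclideanSpace ℝ (Fin m)) =>
      ENNReal.ofReal (α * ‖z.2‖ ^ p)) := by fun_prop
  have hB : Measurable (fun u : EuclideanSpace ℝ (Fin n) =>
      ∫⁻ x, ENNReal.ofReal (α * ‖x‖ ^ p) ∂κ u) :=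
    Measurable.lintegral_kernel_prod_right' (κ := κ) hg2
  calc ∫⁻ y, ENNReal.ofReal (‖G (Ft y) - y‖ ^ p + α * ‖Ft y‖ ^ p) ∂ρy
      = ∫⁻ z, ENNReal.ofReal (‖G (Ft z.2) - z.2‖ ^ p + α * ‖Ft z.2‖ ^ p) ∂cpl := by
        rw [← hcpl.2, lintegral_map hL measurable_snd]
    _ ≤ ∫⁻ z, (ENNReal.ofReal (‖z.1 - z.2‖ ^ p) +
          ∫⁻ x, ENNReal.ofReal (α * ‖x‖ ^ p) ∂κ z.1) ∂cpl := by
        refine lintegral_mono_ae ?_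
        filter_upwards [hae2] with z hz
        have h1 : ENNReal.ofReal (‖G (Ft z.2) - z.2‖ ^ p + α * ‖Ft z.2‖ ^ p)
            = ∫⁻ _x, ENNReal.ofReal (‖G (Ft z.2) - z.2‖ ^ p + α * ‖Ft z.2‖ ^ p) ∂κ z.1 := by
          rw [lintegral_const, measure_univ, mul_one]
        have h2 : ENNReal.ofReal (‖z.1 - z.2‖ ^ p) +
            ∫⁻ x, ENNReal.ofReal (α * ‖x‖ ^ p) ∂κ z.1 =
            ∫⁻ x, (ENNReal.ofReal (‖z.1 - z.2‖ ^ p) + ENNReal.ofReal (α * ‖x‖ ^ p)) ∂κ z.1 := by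
          rw [lintegral_add_left measurable_const, lintegral_const, measure_univ, mul_one]
        rw [h1, h2]
        refine lintegral_mono_ae ?_
        filter_upwards [hz] with x hx
        have hle := hmin x hx.2 z.2
        calc ENNReal.ofReal (‖G (Ft z.2) - z.2‖ ^ p + α * ‖Ft z.2‖ ^ p)
            ≤ ENNReal.ofReal (‖G x - z.2‖ ^ p + α * ‖x‖ ^ p) := ENNReal.ofReal_le_ofReal hle
          _ = ENNReal.ofReal (‖z.1 - z.2‖ ^ p) + ENNReal.ofReal (α * ‖x‖ ^ p) := by
              rw [← hx.1, ENNReal.ofReal_add (rpow_nonneg (norm_nonneg _) p)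
                (mul_nonneg hα (rpow_nonneg (norm_nonneg _) p))]
    _ = (∫⁻ z, ENNReal.ofReal (‖z.1 - z.2‖ ^ p) ∂cpl) +
          ∫⁻ z, (∫⁻ x, ENNReal.ofReal (α * ‖x‖ ^ p) ∂κ z.1) ∂cpl := by
        rw [lintegral_add_left hc]
    _ = (∫⁻ z, ENNReal.ofReal (‖z.1 - z.2‖ ^ p) ∂cpl) +
          ∫⁻ x, ENNReal.ofReal (α * ‖x‖ ^ p) ∂ρ := by
        congr 1
        calc ∫⁻ z, (∫⁻ x, ENNReal.ofReal (α * ‖x‖ ^ p) ∂κ z.1) ∂cpl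
            = ∫⁻ u, (∫⁻ x, ENNReal.ofReal (α * ‖x‖ ^ p) ∂κ u) ∂(cpl.map Prod.fst) := by
              rw [lintegral_map hB measurable_fst]
          _ = ∫⁻ u, (∫⁻ x, ENNReal.ofReal (α * ‖x‖ ^ p) ∂κ u) ∂μ.fst := by
              rw [hcpl.1, hfst]
          _ = ∫⁻ z, ENNReal.ofReal (α * ‖z.2‖ ^ p) ∂(μ.fst ⊗ₘ κ) := by
              rw [Measure.lintegral_compProd hg2]
          _ = ∫⁻ z, ENNReal.ofReal (α * ‖z.2‖ ^ p) ∂μ := by rw [hdis]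
          _ = ∫⁻ x, ENNReal.ofReal (α * ‖x‖ ^ p) ∂ρ := by
              rw [hμ, lintegral_map hg2 hpair]

/-- Let `Θ ⊆ ℝᵐ` be Borel, `G` measurable, `p ≥ 1`, `α > 0`, and `F̃`
a measurable map with `‖G (F̃ y) - y‖^p + α‖F̃ y‖^p ≤ ‖G x - y‖^p + α‖x‖^p` for all
`x ∈ Θ`, `y`. Then: (i) for every probability measure `ρ` on `Θ` and coupling
`π ∈ Γ(ρ, ρy)`, `∫ (‖G(F̃ y) - y‖^p + α‖F̃ y‖^p) dρy ≤ ∫ (‖G x - y‖^p + α‖x‖^p) dπ`;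
(ii) `((G∘F̃) × id)_#ρy` is a coupling of `G_#(F̃_#ρy)` and `ρy` whose cost plus `α`
times the `p`-th moment of `F̃_#ρy` equals the left side of (i). Consequently `F̃_#ρy`
minimizes `W_p^p(G_#ρ, ρy) + α ∫‖x‖^p dρ`. -/
theorem stmt_9 {m n : ℕ} (Θ : Set (EuclideanSpace ℝ (Fin m))) (hΘ : MeasurableSet Θ)
    (G : EuclideanSpace ℝ (Fin m) → EuclideanSpace ℝ (Fin n)) (hG : Measurable G)
    (p : ℝ) (hp : 1 ≤ p) (α : ℝ) (hα : 0 < α)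
    (ρy : Measure (EuclideanSpace ℝ (Fin n))) [IsProbabilityMeasure ρy]
    (Ft : EuclideanSpace ℝ (Fin n) → EuclideanSpace ℝ (Fin m))
    (hFt : Measurable Ft) (hFtΘ : ∀ y, Ft y ∈ Θ)
    (hmin : ∀ x ∈ Θ, ∀ y, ‖G (Ft y) - y‖ ^ p + α * ‖Ft y‖ ^ p ≤
      ‖G x - y‖ ^ p + α * ‖x‖ ^ p) :
    (∀ ρ : Measure (EuclideanSpace ℝ (Fin m)), IsProbabilityMeasure ρ → ρ Θᶜ = 0 →
      ∀ cpl : Measure (EuclideanSpace ℝ (Fin m) × EuclideanSpace ℝ (Fin n)),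
        IsCoupling ρ ρy cpl →
        ∫⁻ y, ENNReal.ofReal (‖G (Ft y) - y‖ ^ p + α * ‖Ft y‖ ^ p) ∂ρy ≤
          ∫⁻ z, ENNReal.ofReal (‖G z.1 - z.2‖ ^ p + α * ‖z.1‖ ^ p) ∂cpl) ∧
    (IsCoupling ((ρy.map Ft).map G) ρy (ρy.map fun y => (G (Ft y), y)) ∧
      (∫⁻ z, ENNReal.ofReal (‖z.1 - z.2‖ ^ p) ∂(ρy.map fun y => (G (Ft y), y))) +
        (∫⁻ x, ENNReal.ofReal (α * ‖x‖ ^ p) ∂(ρy.map Ft)) =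
        ∫⁻ y, ENNReal.ofReal (‖G (Ft y) - y‖ ^ p + α * ‖Ft y‖ ^ p) ∂ρy) ∧
    (∀ ρ : Measure (EuclideanSpace ℝ (Fin m)), IsProbabilityMeasure ρ → ρ Θᶜ = 0 →
      (⨅ (cpl : Measure (EuclideanSpace ℝ (Fin n) × EuclideanSpace ℝ (Fin n)))
        (_ : IsCoupling ((ρy.map Ft).map G) ρy cpl),
        ∫⁻ z, ENNReal.ofReal (‖z.1 - z.2‖ ^ p) ∂cpl) +
        (∫⁻ x, ENNReal.ofReal (α * ‖x‖ ^ p) ∂(ρy.map Ft)) ≤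
      (⨅ (cpl : Measure (EuclideanSpace ℝ (Fin n) × EuclideanSpace ℝ (Fin n)))
        (_ : IsCoupling (ρ.map G) ρy cpl),
        ∫⁻ z, ENNReal.ofReal (‖z.1 - z.2‖ ^ p) ∂cpl) +
        ∫⁻ x, ENNReal.ofReal (α * ‖x‖ ^ p) ∂ρ) := by
  have hGFt : Measurable (fun y => G (Ft y)) := hG.comp hFt
  have hpair : Measurable (fun y => (G (Ft y), y)) := hGFt.prodMk measurable_id
  have hL : Measurable (fun y : EuclideanSpace ℝ (Fin n) =>
      ENNReal.ofReal (‖G (Ft y) - y‖ ^ p + α * ‖Ft y‖ ^ p)) := by fun_prop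
  have hg : Measurable (fun x : EuclideanSpace ℝ (Fin m) =>
      ENNReal.ofReal (α * ‖x‖ ^ p)) := by fun_prop
  have hc : Measurable (fun z : (EuclideanSpace ℝ (Fin n)) × (EuclideanSpace ℝ (Fin n)) =>
      ENNReal.ofReal (‖z.1 - z.2‖ ^ p)) := by fun_prop
  -- part (ii): coupling property
  have hcpl2 : IsCoupling ((ρy.map Ft).map G) ρy (ρy.map fun y => (G (Ft y), y)) := by
    constructor
    · rw [Measure.map_map measurable_fst hpair, Measure.map_map hG hFt]; rfl
    · rw [Measure.map_map measurable_snd hpair]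
      exact Measure.map_id
  -- part (ii): cost identity
  have heq2 : (∫⁻ z, ENNReal.ofReal (‖z.1 - z.2‖ ^ p) ∂(ρy.map fun y => (G (Ft y), y))) +
        (∫⁻ x, ENNReal.ofReal (α * ‖x‖ ^ p) ∂(ρy.map Ft)) =
        ∫⁻ y, ENNReal.ofReal (‖G (Ft y) - y‖ ^ p + α * ‖Ft y‖ ^ p) ∂ρy := by
    rw [lintegral_map hc hpair, lintegral_map hg hFt, ← lintegral_add_left (by fun_prop)]
    refine lintegral_congr fun y => ?_
    exact (ENNReal.ofReal_add (rpow_nonneg (norm_nonneg _) p)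
      (mul_nonneg hα.le (rpow_nonneg (norm_nonneg _) p))).symm
  refine ⟨?_, ⟨hcpl2, heq2⟩, ?_⟩
  · -- part (i)
    intro ρ hρ hρΘ cpl hcpl
    calc ∫⁻ y, ENNReal.ofReal (‖G (Ft y) - y‖ ^ p + α * ‖Ft y‖ ^ p) ∂ρy
        = ∫⁻ z, ENNReal.ofReal (‖G (Ft z.2) - z.2‖ ^ p + α * ‖Ft z.2‖ ^ p) ∂cpl := by
          rw [← hcpl.2, lintegral_map hL measurable_snd]
      _ ≤ ∫⁻ z, ENNReal.ofReal (‖G z.1 - z.2‖ ^ p + α * ‖z.1‖ ^ p) ∂cpl := by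
          refine lintegral_mono_ae ?_
          have hae : ∀ᵐ z ∂cpl, z.1 ∈ Θ := by
            have h1 : ∀ᵐ x ∂(cpl.map Prod.fst), x ∈ Θ := by
              rw [hcpl.1, ae_iff]
              exact hρΘ
            exact (ae_map_iff measurable_fst.aemeasurable hΘ).mp h1
          filter_upwards [hae] with z hz
          exact ENNReal.ofReal_le_ofReal (hmin z.1 hz z.2)
  · -- part (iii)
    intro ρ hρ hρΘ
    haveI := hρ
    have h1 : (⨅ (cpl : Measure (EuclideanSpace ℝ (Fin n) × EuclideanSpace ℝ (Fin n)))
        (_ : IsCoupling ((ρy.map Ft).map G) ρy cpl),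
        ∫⁻ z, ENNReal.ofReal (‖z.1 - z.2‖ ^ p) ∂cpl) +
        (∫⁻ x, ENNReal.ofReal (α * ‖x‖ ^ p) ∂(ρy.map Ft)) ≤
        ∫⁻ y, ENNReal.ofReal (‖G (Ft y) - y‖ ^ p + α * ‖Ft y‖ ^ p) ∂ρy := by
      rw [← heq2]
      exact add_le_add_left (iInf₂_le (ρy.map fun y => (G (Ft y), y)) hcpl2) _
    refine h1.trans ?_
    simp only [ENNReal.iInf_add]
    refine le_iInf fun cpl => le_iInf fun hcpl => ?_
    exact stmt9_aux Θ hΘ G hG p α hα.le ρy Ft hFt hmin ρ hρΘ cpl hcpl
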